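/- There exists a finite rotation-puzzle instance 𝒜 over the two-color tile set T_2 (the two-color MOVE subpuzzle, moving a wire sideways) with a designated input boundary edge at its bottom and a designated output boundary edge at its top horizontally displaced by two positions from the input edge, such that for each color c ∈ {blue, red} the instance 𝒜 has exactly one solution whose color at the input edge is c, and this solution has color c at the output edge. -/

import Mathlib

/-- The two Tantrix colors used in the two-color tile set. -/
inductive Color where
  | red
  | blue
deriving DecidableEq

/-- A tile is its clockwise color sequence: a word of length 6 over the colors,
edges indexed `0, …, 5` clockwise. -/
abbrev Tile := Fin 6 → Color

/-- Cyclic rotation of a tile by `k` steps: edge `i` of the rotated tile carries the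
color of edge `i + k` of the original sequence.  Two solutions are compared as the
assigned rotated color sequences, so orientations of a tile with identical color
sequences are identified. -/
def rotTile (k : Fin 6) (t : Tile) : Tile := fun i => t (i + k)

open Color in
/-- The two-color tile set `T₂`, consisting of the 8 color sequences
bbrrrr, rrbbbb, brrbrr, rbbrbb, rbrrrb, brbbbr, bbbbbb, rrrrrr. -/
def T2 : Set Tile :=
  { ![blue,blue,red,red,red,red],
    ![red,red,blue,blue,blue,blue],
    ![blue,red,red,blue,red,red],
    ![red,blue,blue,red,blue,blue],
    ![red,blue,red,red,red,blue],
    ![blue,red,blue,blue,blue,red],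
    ![blue,blue,blue,blue,blue,blue],
    ![red,red,red,red,red,red] }

/-- The six neighbor offsets of the hexagonal layout of `ℤ²`, listed clockwise
starting from straight up; edge `i` of a tile at `x` is the edge shared with the
neighboring point `x + dirs i`, and opposite directions differ by `3` (mod 6).
Two points are neighbors exactly if their difference is one of these offsets. -/
def dirs : Fin 6 → ℤ × ℤ := ![(0,1), (1,1), (1,0), (0,-1), (-1,-1), (-1,0)]

/-- A finite rotation-puzzle instance over the tile set `T2`:
a function from a finite set of points of `ℤ²` to `T2`. -/
structure Puzzle where
  tiles : ℤ × ℤ → Option Tile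
  finite : {x | tiles x ≠ none}.Finite
  memT2 : ∀ x t, tiles x = some t → t ∈ T2

/-- `sol` is a solution of the instance `P`: it assigns to each occupied point a
cyclic rotation of the tile placed there, such that for every pair of neighboring
occupied points the two assigned sequences give the same color to their joint edge
(edge `d` of the tile at `x` is glued to edge `d + 3` of the tile at `x + dirs d`). -/
def IsSolution (P : Puzzle) (sol : ℤ × ℤ → Option Tile) : Prop :=
  (∀ x, (P.tiles x = none → sol x = none) ∧
    (∀ t, P.tiles x = some t → ∃ k : Fin 6, sol x = some (rotTile k t))) ∧
  (∀ (x : ℤ × ℤ) (d : Fin 6) (s s' : Tile),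
    sol x = some s → sol (x + dirs d) = some s' → s d = s' (d + 3))

/-- `(x, d)` is a boundary edge of `P`: the point `x` is occupied and its
neighbor in direction `d` is not. -/
def IsBoundary (P : Puzzle) (x : ℤ × ℤ) (d : Fin 6) : Prop :=
  P.tiles x ≠ none ∧ P.tiles (x + dirs d) = none

/-- The solution `sol` has color `c` at the edge in direction `d` of the tile at `x`. -/
def SolColor (sol : ℤ × ℤ → Option Tile) (x : ℤ × ℤ) (d : Fin 6) (c : Color) : Prop :=
  ∃ s, sol x = some s ∧ s d = c

section MOVE

open Color

def tA : Tile := ![blue,red,red,blue,red,red]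
def tB : Tile := ![red,red,blue,blue,blue,blue]
def tD : Tile := ![red,blue,blue,red,blue,blue]
def sD : Tile := ![blue,red,blue,blue,red,blue]
def sE : Tile := ![blue,blue,blue,blue,red,red]
def sA' : Tile := ![red,blue,red,red,blue,red]
def sB' : Tile := ![blue,blue,blue,red,red,blue]
def sE' : Tile := ![red,blue,blue,blue,blue,red]

def pt : ℤ × ℤ → Option Tile := fun x =>
  if x = (0,0) then some tA
  else if x = (0,1) then some tB
  else if x = (1,2) then some tA
  else if x = (1,1) then some tD
  else if x = (2,2) then some tB
  else none

def Pz : Puzzle where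
  tiles := pt
  finite := by
    apply Set.Finite.subset
      (s := ({((0:ℤ),(0:ℤ)), (0,1), (1,2), (1,1), (2,2)} : Set (ℤ×ℤ)))
    · exact ((((Set.finite_singleton _).insert _).insert _).insert _).insert _
    · intro x hx
      by_contra h
      simp only [Set.mem_insert_iff, Set.mem_singleton_iff] at h
      push_neg at h
      obtain ⟨h1,h2,h3,h4,h5⟩ := h
      exact hx (by simp only [pt, if_neg h1, if_neg h2, if_neg h3, if_neg h4, if_neg h5])
  memT2 := by
    intro x t h
    simp only [pt] at h
    split_ifs at h <;>
      first
        | exact Option.noConfusion h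
        | (obtain rfl := Option.some.inj h;
           simp only [T2, Set.mem_insert_iff, Set.mem_singleton_iff]; decide)

def solBlue : ℤ × ℤ → Option Tile := fun x =>
  if x = (0,0) then some tA
  else if x = (0,1) then some tB
  else if x = (1,2) then some tA
  else if x = (1,1) then some sD
  else if x = (2,2) then some sE
  else none

def solRed : ℤ × ℤ → Option Tile := fun x =>
  if x = (0,0) then some sA'
  else if x = (0,1) then some sB'
  else if x = (1,2) then some sA'
  else if x = (1,1) then some tD
  else if x = (2,2) then some sE'
  else none

set_option synthInstance.maxSize 2000 in
set_option synthInstance.maxHeartbeats 1000000 in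
theorem keyB : ∀ kA kB kC kD kE : Fin 6,
    rotTile kA tA 3 = blue →
    rotTile kA tA 0 = rotTile kB tB 3 →
    rotTile kA tA 1 = rotTile kD tD 4 →
    rotTile kB tB 1 = rotTile kC tA 4 →
    rotTile kB tB 2 = rotTile kD tD 5 →
    rotTile kC tA 2 = rotTile kE tB 5 →
    rotTile kD tD 0 = rotTile kC tA 3 →
    rotTile kD tD 1 = rotTile kE tB 4 →
    rotTile kA tA = tA ∧ rotTile kB tB = tB ∧ rotTile kC tA = tA ∧
      rotTile kD tD = sD ∧ rotTile kE tB = sE := by decide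

set_option synthInstance.maxSize 2000 in
set_option synthInstance.maxHeartbeats 1000000 in
theorem keyR : ∀ kA kB kC kD kE : Fin 6,
    rotTile kA tA 3 = red →
    rotTile kA tA 0 = rotTile kB tB 3 →
    rotTile kA tA 1 = rotTile kD tD 4 →
    rotTile kB tB 1 = rotTile kC tA 4 →
    rotTile kB tB 2 = rotTile kD tD 5 →
    rotTile kC tA 2 = rotTile kE tB 5 →
    rotTile kD tD 0 = rotTile kC tA 3 →
    rotTile kD tD 1 = rotTile kE tB 4 →
    rotTile kA tA = sA' ∧ rotTile kB tB = sB' ∧ rotTile kC tA = sA' ∧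
      rotTile kD tD = tD ∧ rotTile kE tB = sE' := by decide

theorem isSolBlue : IsSolution Pz solBlue := by
  constructor
  · intro x
    constructor
    · intro hx
      replace hx : pt x = none := hx
      simp only [pt] at hx
      simp only [solBlue]
      split_ifs at hx ⊢ <;> first | rfl | exact Option.noConfusion hx
    · intro t ht
      replace ht : pt x = some t := ht
      simp only [pt] at ht
      split_ifs at ht with h1 h2 h3 h4 h5
      · obtain rfl := Option.some.inj ht
        exact ⟨0, by rw [h1]; exact congrArg some (by decide)⟩
      · obtain rfl := Option.some.inj ht
        exact ⟨0, by rw [h2]; exact congrArg some (by decide)⟩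
      · obtain rfl := Option.some.inj ht
        exact ⟨0, by rw [h3]; exact congrArg some (by decide)⟩
      · obtain rfl := Option.some.inj ht
        exact ⟨2, by rw [h4]; exact congrArg some (by decide)⟩
      · obtain rfl := Option.some.inj ht
        exact ⟨2, by rw [h5]; exact congrArg some (by decide)⟩
  · intro x d s s' h1 h2
    have hx : x = ((0:ℤ),(0:ℤ)) ∨ x = (0,1) ∨ x = (1,2) ∨ x = (1,1) ∨ x = (2,2) := by
      by_contra hc
      push_neg at hc
      obtain ⟨e1,e2,e3,e4,e5⟩ := hc
      simp only [solBlue, if_neg e1, if_neg e2, if_neg e3, if_neg e4, if_neg e5] at h1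
      exact nomatch h1
    rcases hx with rfl|rfl|rfl|rfl|rfl <;> fin_cases d <;>
      first
        | exact Option.noConfusion (show (none : Option Tile) = some s' from h2)
        | (obtain rfl := Option.some.inj (h1 : some _ = _)
           obtain rfl := Option.some.inj (h2 : some _ = _)
           decide)
        | (obtain rfl := Option.some.inj (h1 : some _ = _)
           simp [solBlue, solRed, dirs] at h2 <;> subst h2 <;> decide)

theorem isSolRed : IsSolution Pz solRed := by
  constructor
  · intro x
    constructor
    · intro hx
      replace hx : pt x = none := hx
      simp only [pt] at hx
      simp only [solRed]
      split_ifs at hx ⊢ <;> first | rfl | exact Option.noConfusion hx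
    · intro t ht
      replace ht : pt x = some t := ht
      simp only [pt] at ht
      split_ifs at ht with h1 h2 h3 h4 h5
      · obtain rfl := Option.some.inj ht
        exact ⟨2, by rw [h1]; exact congrArg some (by decide)⟩
      · obtain rfl := Option.some.inj ht
        exact ⟨3, by rw [h2]; exact congrArg some (by decide)⟩
      · obtain rfl := Option.some.inj ht
        exact ⟨2, by rw [h3]; exact congrArg some (by decide)⟩
      · obtain rfl := Option.some.inj ht
        exact ⟨0, by rw [h4]; exact congrArg some (by decide)⟩
      · obtain rfl := Option.some.inj ht
        exact ⟨1, by rw [h5]; exact congrArg some (by decide)⟩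
  · intro x d s s' h1 h2
    have hx : x = ((0:ℤ),(0:ℤ)) ∨ x = (0,1) ∨ x = (1,2) ∨ x = (1,1) ∨ x = (2,2) := by
      by_contra hc
      push_neg at hc
      obtain ⟨e1,e2,e3,e4,e5⟩ := hc
      simp only [solRed, if_neg e1, if_neg e2, if_neg e3, if_neg e4, if_neg e5] at h1
      exact nomatch h1
    rcases hx with rfl|rfl|rfl|rfl|rfl <;> fin_cases d <;>
      first
        | exact Option.noConfusion (show (none : Option Tile) = some s' from h2)
        | (obtain rfl := Option.some.inj (h1 : some _ = _)
           obtain rfl := Option.some.inj (h2 : some _ = _)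
           decide)
        | (obtain rfl := Option.some.inj (h1 : some _ = _)
           simp [solBlue, solRed, dirs] at h2 <;> subst h2 <;> decide)

end MOVE

/-- the two-color MOVE subpuzzle: input boundary edge at the bottom, output boundary edge at the top horizontally displaced by two positions; for each color `c ∈ {blue, red}` there is exactly one solution with color `c` at the input edge, and it has color `c` at the output edge. -/
theorem two_color_MOVE_subpuzzle :
    ∃ (P : Puzzle) (xIn xOut : ℤ × ℤ),
      IsBoundary P xIn 3 ∧ IsBoundary P xOut 0 ∧
      (xOut.1 = xIn.1 + 2 ∨ xOut.1 = xIn.1 - 2) ∧ xIn.2 < xOut.2 ∧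
      ∀ c ∈ ({Color.blue, Color.red} : Set Color),
        ∃ sol : ℤ × ℤ → Option Tile,
          (IsSolution P sol ∧ SolColor sol xIn 3 c ∧ SolColor sol xOut 0 c) ∧
          (∀ sol' : ℤ × ℤ → Option Tile,
            IsSolution P sol' → SolColor sol' xIn 3 c → sol' = sol) := by
  refine ⟨Pz, (0,0), (2,2), ⟨fun h => by simp [Pz, pt] at h, rfl⟩,
    ⟨fun h => by simp [Pz, pt] at h, rfl⟩, Or.inl (by norm_num), by norm_num, ?_⟩
  intro c hc
  simp only [Set.mem_insert_iff, Set.mem_singleton_iff] at hc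
  rcases hc with rfl | rfl
  · refine ⟨solBlue, ⟨isSolBlue, ⟨tA, rfl, rfl⟩, ⟨sE, rfl, rfl⟩⟩, ?_⟩
    intro sol' hsol' hcol
    obtain ⟨hloc, hmatch⟩ := hsol'
    obtain ⟨kA, hA⟩ := (hloc (0,0)).2 tA rfl
    obtain ⟨kB, hB⟩ := (hloc (0,1)).2 tB rfl
    obtain ⟨kC, hC⟩ := (hloc (1,2)).2 tA rfl
    obtain ⟨kD, hD⟩ := (hloc (1,1)).2 tD rfl
    obtain ⟨kE, hE⟩ := (hloc (2,2)).2 tB rfl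
    have e1 := hmatch (0,0) 0 _ _ hA hB
    have e2 := hmatch (0,0) 1 _ _ hA hD
    have e3 := hmatch (0,1) 1 _ _ hB hC
    have e4 := hmatch (0,1) 2 _ _ hB hD
    have e5 := hmatch (1,2) 2 _ _ hC hE
    have e6 := hmatch (1,1) 0 _ _ hD hC
    have e7 := hmatch (1,1) 1 _ _ hD hE
    obtain ⟨s, hs, hsc⟩ := hcol
    rw [hA] at hs
    obtain rfl := Option.some.inj hs
    obtain ⟨rA, rB, rC, rD, rE⟩ := keyB kA kB kC kD kE hsc e1 e2 e3 e4 e5 e6 e7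
    funext x
    by_cases h1 : x = ((0:ℤ),(0:ℤ))
    · rw [h1, hA, rA]; rfl
    by_cases h2 : x = ((0:ℤ),(1:ℤ))
    · rw [h2, hB, rB]; rfl
    by_cases h3 : x = ((1:ℤ),(2:ℤ))
    · rw [h3, hC, rC]; rfl
    by_cases h4 : x = ((1:ℤ),(1:ℤ))
    · rw [h4, hD, rD]; rfl
    by_cases h5 : x = ((2:ℤ),(2:ℤ))
    · rw [h5, hE, rE]; rfl
    have hnone : Pz.tiles x = none := by
      show pt x = none
      simp only [pt, if_neg h1, if_neg h2, if_neg h3, if_neg h4, if_neg h5]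
    rw [(hloc x).1 hnone]
    simp only [solBlue, if_neg h1, if_neg h2, if_neg h3, if_neg h4, if_neg h5]
  · refine ⟨solRed, ⟨isSolRed, ⟨sA', rfl, rfl⟩, ⟨sE', rfl, rfl⟩⟩, ?_⟩
    intro sol' hsol' hcol
    obtain ⟨hloc, hmatch⟩ := hsol'
    obtain ⟨kA, hA⟩ := (hloc (0,0)).2 tA rfl
    obtain ⟨kB, hB⟩ := (hloc (0,1)).2 tB rfl
    obtain ⟨kC, hC⟩ := (hloc (1,2)).2 tA rfl
    obtain ⟨kD, hD⟩ := (hloc (1,1)).2 tD rfl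
    obtain ⟨kE, hE⟩ := (hloc (2,2)).2 tB rfl
    have e1 := hmatch (0,0) 0 _ _ hA hB
    have e2 := hmatch (0,0) 1 _ _ hA hD
    have e3 := hmatch (0,1) 1 _ _ hB hC
    have e4 := hmatch (0,1) 2 _ _ hB hD
    have e5 := hmatch (1,2) 2 _ _ hC hE
    have e6 := hmatch (1,1) 0 _ _ hD hC
    have e7 := hmatch (1,1) 1 _ _ hD hE
    obtain ⟨s, hs, hsc⟩ := hcol
    rw [hA] at hs
    obtain rfl := Option.some.inj hs
    obtain ⟨rA, rB, rC, rD, rE⟩ := keyR kA kB kC kD kE hsc e1 e2 e3 e4 e5 e6 e7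
    funext x
    by_cases h1 : x = ((0:ℤ),(0:ℤ))
    · rw [h1, hA, rA]; rfl
    by_cases h2 : x = ((0:ℤ),(1:ℤ))
    · rw [h2, hB, rB]; rfl
    by_cases h3 : x = ((1:ℤ),(2:ℤ))
    · rw [h3, hC, rC]; rfl
    by_cases h4 : x = ((1:ℤ),(1:ℤ))
    · rw [h4, hD, rD]; rfl
    by_cases h5 : x = ((2:ℤ),(2:ℤ))
    · rw [h5, hE, rE]; rfl
    have hnone : Pz.tiles x = none := by
      show pt x = none
      simp only [pt, if_neg h1, if_neg h2, if_neg h3, if_neg h4, if_neg h5]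
    rw [(hloc x).1 hnone]
    simp only [solRed, if_neg h1, if_neg h2, if_neg h3, if_neg h4, if_neg h5]
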